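/- Suppose W = W̃ (the coefficient and exponent matrices coincide). Then for every parameter vector c > 0, the map F_c is real analytic, injective, and its image is exactly the interior C° of the cone C = cone(W); that is, F_c is a bijection from ℝ^d onto C°. -/

import Mathlib

open scoped BigOperators

noncomputable section

/-- The generalized exponential map `F_c(x) = ∑ i, c_i exp(w̃^i · x) w^i`. -/
def Fmap {d dt n : ℕ} (W : Matrix (Fin d) (Fin n) ℝ) (Wt : Matrix (Fin dt) (Fin n) ℝ)
    (c : Fin n → ℝ) (x : Fin dt → ℝ) : Fin d → ℝ :=
  fun i => ∑ j, c j * Real.exp (∑ k, Wt k j * x k) * W i j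

/-- The polyhedral cone generated by the columns of `W`. -/
def coneOf {d n : ℕ} (W : Matrix (Fin d) (Fin n) ℝ) : Set (Fin d → ℝ) :=
  {y | ∃ u : Fin n → ℝ, (∀ j, 0 ≤ u j) ∧ y = fun i => ∑ j, u j * W i j}

/-- The componentwise sign vector. -/
def signVec {n : ℕ} (x : Fin n → ℝ) : Fin n → SignType := fun i => SignType.sign (x i)

/-- The set of sign vectors of a set of real vectors. -/
def signSet {n : ℕ} (T : Set (Fin n → ℝ)) : Set (Fin n → SignType) := signVec '' T

/-- The kernel of (the linear map given by) a matrix, as a set. -/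
def kerSet {d n : ℕ} (W : Matrix (Fin d) (Fin n) ℝ) : Set (Fin n → ℝ) :=
  {x | W.mulVec x = 0}

/-- The orthogonal complement (w.r.t. the standard inner product) of a set in `ℝ^n`. -/
def orthSet {n : ℕ} (T : Set (Fin n → ℝ)) : Set (Fin n → ℝ) :=
  {v | ∀ u ∈ T, ∑ i, u i * v i = 0}

open Matrix

/-- Elementary scalar bound: `c e^t - u t ≥ u|t| - 4u²/c` for `c, u > 0`. -/
lemma Stmt0Aux.scalar_bound (c u t : ℝ) (hc : 0 < c) (hu : 0 < u) :
    u * |t| - 4*u^2/c ≤ c * Real.exp t - u * t := by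
  have hβ : c * (4*u^2/c) = 4*u^2 := by field_simp
  rcases le_or_gt t 0 with h | h
  · rw [abs_of_nonpos h]
    nlinarith [Real.exp_pos t, div_pos (by positivity : (0:ℝ) < 4*u^2) hc]
  · rw [abs_of_pos h]
    have h1 : t/2 + 1 ≤ Real.exp (t/2) := Real.add_one_le_exp _
    have h2 : Real.exp (t/2) * Real.exp (t/2) = Real.exp t := by
      rw [← Real.exp_add]; ring_nf
    have h3 : (t/2)^2 ≤ Real.exp t := by nlinarith [Real.exp_pos (t/2)]
    nlinarith [sq_nonneg (c*t - 4*u), mul_le_mul_of_nonneg_left h3 (mul_pos hc hc).le]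

lemma Stmt0Aux.transpose_ker {d n : ℕ} (W : Matrix (Fin d) (Fin n) ℝ) (hW : W.rank = d) :
    LinearMap.ker (Matrix.mulVecLin Wᵀ) = ⊥ := by
  have h1 : (Wᵀ).rank = d := by rw [Matrix.rank_transpose]; exact hW
  have h2 : Module.finrank ℝ (LinearMap.range (Matrix.mulVecLin Wᵀ))
      + Module.finrank ℝ (LinearMap.ker (Matrix.mulVecLin Wᵀ)) = d := by
    rw [LinearMap.finrank_range_add_finrank_ker]
    exact Module.finrank_fin_fun ℝ
  have h3 : Module.finrank ℝ (LinearMap.ker (Matrix.mulVecLin Wᵀ)) = 0 := by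
    have : (Wᵀ).rank = Module.finrank ℝ (LinearMap.range (Matrix.mulVecLin Wᵀ)) := rfl
    omega
  exact Submodule.finrank_eq_zero.mp h3

lemma Stmt0Aux.mulVec_surj {d n : ℕ} (W : Matrix (Fin d) (Fin n) ℝ) (hW : W.rank = d) :
    Function.Surjective (Matrix.mulVecLin W) := by
  rw [← LinearMap.range_eq_top]
  apply Submodule.eq_top_of_finrank_eq
  rw [show Module.finrank ℝ (Fin d → ℝ) = d from Module.finrank_fin_fun ℝ]
  exact hW

/-- Summation-by-parts style identity. -/
lemma Stmt0Aux.sum_identity {d n : ℕ} (W : Matrix (Fin d) (Fin n) ℝ) (a : Fin n → ℝ)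
    (x y : Fin d → ℝ) :
    ∑ j, a j * (∑ k, W k j * x k - ∑ k, W k j * y k)
      = ∑ k, (∑ j, a j * W k j) * (x k - y k) := by
  calc ∑ j, a j * (∑ k, W k j * x k - ∑ k, W k j * y k)
      = ∑ j, ∑ k, a j * W k j * (x k - y k) := by
        refine Finset.sum_congr rfl fun j _ => ?_
        rw [← Finset.sum_sub_distrib, Finset.mul_sum]
        exact Finset.sum_congr rfl fun k _ => by ring
    _ = ∑ k, ∑ j, a j * W k j * (x k - y k) := Finset.sum_comm
    _ = ∑ k, (∑ j, a j * W k j) * (x k - y k) := by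
        refine Finset.sum_congr rfl fun k _ => ?_
        rw [Finset.sum_mul]

/-- The key surjectivity step: every positive combination of the columns is attained. -/
lemma Stmt0Aux.exists_preimage {d n : ℕ} (hd : 1 ≤ d) (hdn : d ≤ n)
    (W : Matrix (Fin d) (Fin n) ℝ) (hW : W.rank = d)
    (c : Fin n → ℝ) (hc : ∀ j, 0 < c j)
    (u : Fin n → ℝ) (hu : ∀ j, 0 < u j) :
    ∃ x, Fmap W W c x = fun i => ∑ j, u j * W i j := by
  classical
  haveI : Nonempty (Fin n) := ⟨⟨0, Nat.lt_of_lt_of_le hd hdn⟩⟩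
  set L : (Fin d → ℝ) →L[ℝ] (Fin n → ℝ) :=
    LinearMap.toContinuousLinearMap (Matrix.mulVecLin Wᵀ) with hLdef
  have hLapp : ∀ (x : Fin d → ℝ) (j : Fin n), L x j = ∑ k, W k j * x k := by
    intro x j
    simp [hLdef, Matrix.mulVec, Matrix.vecMul, dotProduct, Matrix.transpose_apply,
      mul_comm]
  set ℓ : Fin n → (Fin d → ℝ) →L[ℝ] ℝ := fun j => (ContinuousLinearMap.proj j).comp L with hldef
  have hlapp : ∀ (x : Fin d → ℝ) (j : Fin n), ℓ j x = L x j := fun _ _ => rfl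
  set g : (Fin d → ℝ) → ℝ := fun x => ∑ j, (c j * Real.exp (L x j) - u j * L x j) with hgdef
  -- derivative
  have hg : ∀ x₀ : Fin d → ℝ,
      HasFDerivAt g (∑ j, (c j * Real.exp (L x₀ j) - u j) • (ℓ j)) x₀ := by
    intro x₀
    apply HasFDerivAt.fun_sum
    intro j _
    have h1 : HasFDerivAt (fun x => (ℓ j) x) (ℓ j) x₀ := (ℓ j).hasFDerivAt
    have h2 : HasFDerivAt (fun x => Real.exp ((ℓ j) x)) (Real.exp ((ℓ j) x₀) • (ℓ j)) x₀ :=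
      (Real.hasDerivAt_exp ((ℓ j) x₀)).comp_hasFDerivAt x₀ h1
    have h3 := (h2.const_mul (c j)).sub (h1.const_mul (u j))
    convert h3 using 1
    · rfl
    ext v
    simp only [ContinuousLinearMap.coe_smul', ContinuousLinearMap.coe_sub', Pi.smul_apply,
      Pi.sub_apply, smul_eq_mul]
    simp only [hlapp]
    ring
  -- continuity
  have hcont : Continuous g := by
    apply continuous_finset_sum
    intro j _
    exact (continuous_const.mul
        (Real.continuous_exp.comp ((continuous_apply j).comp L.continuous))).sub
      (continuous_const.mul ((continuous_apply j).comp L.continuous))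
  -- coercivity
  obtain ⟨K, hK0, hKa⟩ := LinearMap.exists_antilipschitzWith _ (Stmt0Aux.transpose_ker W hW)
  have hKx : ∀ x : Fin d → ℝ, ‖x‖ ≤ K * ‖L x‖ := by
    intro x
    have := hKa.le_mul_dist x 0
    simpa [hLdef, dist_eq_norm] using this
  set umin : ℝ := Finset.univ.inf' Finset.univ_nonempty u with huminDef
  have humin : 0 < umin := by
    rw [huminDef, Finset.lt_inf'_iff]
    exact fun j _ => hu j
  have huminle : ∀ j, umin ≤ u j := fun j => Finset.inf'_le _ (Finset.mem_univ j)
  set B : ℝ := ∑ j, 4*(u j)^2/(c j) with hBdef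
  have hlow : ∀ x : Fin d → ℝ, umin * ((K:ℝ)⁻¹ * ‖x‖) - B ≤ g x := by
    intro x
    have h1 : ∀ j : Fin n, u j * |L x j| - 4*(u j)^2/(c j)
        ≤ c j * Real.exp (L x j) - u j * L x j :=
      fun j => Stmt0Aux.scalar_bound (c j) (u j) (L x j) (hc j) (hu j)
    have h2 : ∑ j, u j * |L x j| - B ≤ g x := by
      rw [hgdef, hBdef, ← Finset.sum_sub_distrib]
      exact Finset.sum_le_sum fun j _ => h1 j
    have h3 : umin * ‖L x‖ ≤ ∑ j, u j * |L x j| := by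
      have h4 : ‖L x‖ ≤ ∑ j, |L x j| := by
        rw [pi_norm_le_iff_of_nonneg (Finset.sum_nonneg fun j _ => abs_nonneg _)]
        intro j
        rw [Real.norm_eq_abs]
        exact Finset.single_le_sum (f := fun j => |L x j|) (fun j _ => abs_nonneg _)
          (Finset.mem_univ j)
      calc umin * ‖L x‖ ≤ umin * ∑ j, |L x j| := mul_le_mul_of_nonneg_left h4 humin.le
        _ = ∑ j, umin * |L x j| := Finset.mul_sum _ _ _
        _ ≤ ∑ j, u j * |L x j| := Finset.sum_le_sum fun j _ =>
            mul_le_mul_of_nonneg_right (huminle j) (abs_nonneg _)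
    have h5 : umin * ((K:ℝ)⁻¹ * ‖x‖) ≤ umin * ‖L x‖ := by
      apply mul_le_mul_of_nonneg_left _ humin.le
      rw [inv_mul_le_iff₀ (by exact_mod_cast hK0)]
      exact (hKx x).trans (le_of_eq (by ring))
    linarith
  -- existence of a global minimum
  have hcoer : Filter.Tendsto g (Filter.cocompact _) Filter.atTop := by
    apply Filter.tendsto_atTop_mono hlow
    have h6 : Filter.Tendsto (fun x : Fin d → ℝ => umin * ((K:ℝ)⁻¹ * ‖x‖))
        (Filter.cocompact _) Filter.atTop :=
      (tendsto_norm_cocompact_atTop.const_mul_atTop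
        (inv_pos.mpr (by exact_mod_cast hK0))).const_mul_atTop humin
    simpa [sub_eq_add_neg] using Filter.tendsto_atTop_add_const_right _ (-B) h6
  obtain ⟨x₀, hx₀⟩ := hcont.exists_forall_le hcoer
  -- the derivative vanishes at the minimum
  have hmin : IsLocalMin g x₀ := Filter.Eventually.of_forall hx₀
  have hzero : (∑ j, (c j * Real.exp (L x₀ j) - u j) • (ℓ j)) = 0 :=
    hmin.hasFDerivAt_eq_zero (hg x₀)
  refine ⟨x₀, ?_⟩
  funext i
  have happ := congrArg (fun (T : (Fin d → ℝ) →L[ℝ] ℝ) => T (Pi.single i 1)) hzero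
  simp only [ContinuousLinearMap.coe_sum', Finset.sum_apply, ContinuousLinearMap.coe_smul',
    Pi.smul_apply, smul_eq_mul, ContinuousLinearMap.zero_apply] at happ
  have hsingle : ∀ j : Fin n, ℓ j (Pi.single i 1) = W i j := by
    intro j
    rw [hlapp, hLapp]
    simp [Pi.single_apply]
  rw [Finset.sum_congr rfl (fun j _ => by rw [hsingle j])] at happ
  have : ∑ j, (c j * Real.exp (L x₀ j)) * W i j = ∑ j, u j * W i j := by
    rw [← sub_eq_zero, ← Finset.sum_sub_distrib, ← happ]
    exact Finset.sum_congr rfl fun j _ => by ring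
  simp only [Fmap]
  rw [← this]
  exact Finset.sum_congr rfl fun j _ => by rw [hLapp]

set_option maxHeartbeats 1000000 in
theorem stmt0 {d n : ℕ} (hd : 1 ≤ d) (hdn : d ≤ n)
    (W : Matrix (Fin d) (Fin n) ℝ) (hW : W.rank = d)
    (c : Fin n → ℝ) (hc : ∀ j, 0 < c j) :
    (∀ x, AnalyticAt ℝ (Fmap W W c) x) ∧
    Function.Injective (Fmap W W c) ∧
    Set.range (Fmap W W c) = interior (coneOf W) := by
  classical
  have hLinj : Function.Injective (Matrix.mulVecLin Wᵀ) :=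
    LinearMap.ker_eq_bot.mp (Stmt0Aux.transpose_ker W hW)
  refine ⟨?_, ?_, ?_⟩
  -- analyticity
  · intro x
    unfold Fmap
    apply AnalyticAt.pi
    intro i
    apply Finset.analyticAt_fun_sum
    intro j _
    apply AnalyticAt.mul _ analyticAt_const
    apply AnalyticAt.mul analyticAt_const
    apply AnalyticAt.rexp
    apply Finset.analyticAt_fun_sum
    intro k _
    exact analyticAt_const.mul ((ContinuousLinearMap.proj (R := ℝ) (φ := fun _ : Fin d => ℝ) k).analyticAt x)
  -- injectivity
  · intro x y hxy
    by_contra hne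
    set A : Fin n → ℝ := fun j => ∑ k, W k j * x k with hA
    set Bv : Fin n → ℝ := fun j => ∑ k, W k j * y k with hB
    have hmv : ∀ z : Fin d → ℝ, (Matrix.mulVecLin Wᵀ) z = fun j => ∑ k, W k j * z k := by
      intro z
      funext j
      simp [Matrix.mulVec, Matrix.vecMul, dotProduct, Matrix.transpose_apply, mul_comm]
    have hAB : A ≠ Bv := by
      intro h
      apply hne
      apply hLinj
      rw [hmv x, hmv y]
      exact h
    obtain ⟨j0, hj0⟩ := Function.ne_iff.mp hAB
    have hterm : ∀ j, 0 ≤ c j * (Real.exp (A j) - Real.exp (Bv j)) * (A j - Bv j) := by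
      intro j
      rcases le_total (A j) (Bv j) with h | h
      · have h2 : Real.exp (A j) ≤ Real.exp (Bv j) := Real.exp_le_exp.mpr h
        nlinarith [(hc j).le, mul_nonneg (sub_nonneg.mpr h2) (sub_nonneg.mpr h)]
      · have h2 : Real.exp (Bv j) ≤ Real.exp (A j) := Real.exp_le_exp.mpr h
        nlinarith [(hc j).le, mul_nonneg (sub_nonneg.mpr h2) (sub_nonneg.mpr h)]
    have hpos : 0 < c j0 * (Real.exp (A j0) - Real.exp (Bv j0)) * (A j0 - Bv j0) := by
      rcases hj0.lt_or_gt with h | h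
      · have h2 : Real.exp (A j0) < Real.exp (Bv j0) := Real.exp_lt_exp.mpr h
        nlinarith [hc j0, mul_pos (sub_pos.mpr h2) (sub_pos.mpr h)]
      · have h2 : Real.exp (Bv j0) < Real.exp (A j0) := Real.exp_lt_exp.mpr h
        nlinarith [hc j0, mul_pos (sub_pos.mpr h2) (sub_pos.mpr h)]
    have hsum : 0 < ∑ j, c j * (Real.exp (A j) - Real.exp (Bv j)) * (A j - Bv j) :=
      Finset.sum_pos' (fun j _ => hterm j) ⟨j0, Finset.mem_univ j0, hpos⟩
    have hid : ∑ j, c j * (Real.exp (A j) - Real.exp (Bv j)) * (A j - Bv j)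
        = ∑ k, (Fmap W W c x k - Fmap W W c y k) * (x k - y k) := by
      have h1 := Stmt0Aux.sum_identity W
        (fun j => c j * (Real.exp (A j) - Real.exp (Bv j))) x y
      calc ∑ j, c j * (Real.exp (A j) - Real.exp (Bv j)) * (A j - Bv j)
          = ∑ j, (c j * (Real.exp (A j) - Real.exp (Bv j)))
              * (∑ k, W k j * x k - ∑ k, W k j * y k) := by
            exact Finset.sum_congr rfl fun j _ => by rw [hA, hB]
        _ = ∑ k, (∑ j, (c j * (Real.exp (A j) - Real.exp (Bv j))) * W k j) * (x k - y k) := h1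
        _ = ∑ k, (Fmap W W c x k - Fmap W W c y k) * (x k - y k) := by
            refine Finset.sum_congr rfl fun k _ => ?_
            congr 1
            simp only [Fmap, ← Finset.sum_sub_distrib]
            exact Finset.sum_congr rfl fun j _ => by rw [hA, hB]; ring
    rw [hxy] at hid
    simp only [sub_self, zero_mul, Finset.sum_const_zero] at hid
    linarith
  -- range = interior of cone
  · set M : (Fin n → ℝ) →L[ℝ] (Fin d → ℝ) :=
      LinearMap.toContinuousLinearMap (Matrix.mulVecLin W) with hMdef
    have hMapp : ∀ (v : Fin n → ℝ) (i : Fin d), M v i = ∑ j, v j * W i j := by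
      intro v i
      simp [hMdef, Matrix.mulVec, dotProduct, mul_comm]
    have hMsurj : Function.Surjective M := Stmt0Aux.mulVec_surj W hW
    have hSopen : IsOpen {v : Fin n → ℝ | ∀ j, 0 < v j} := by
      have : {v : Fin n → ℝ | ∀ j, 0 < v j} = Set.univ.pi (fun _ => Set.Ioi (0:ℝ)) := by
        ext v; simp [Set.mem_pi]
      rw [this]
      exact isOpen_set_pi Set.finite_univ fun _ _ => isOpen_Ioi
    have hopen : IsOpen (M '' {v : Fin n → ℝ | ∀ j, 0 < v j}) :=
      (ContinuousLinearMap.isOpenMap M hMsurj) _ hSopen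
    have hsub : M '' {v : Fin n → ℝ | ∀ j, 0 < v j} ⊆ coneOf W := by
      rintro y ⟨v, hv, rfl⟩
      exact ⟨v, fun j => (hv j).le, funext fun i => hMapp v i⟩
    apply Set.Subset.antisymm
    · rintro y ⟨x, rfl⟩
      apply interior_maximal hsub hopen
      refine ⟨fun j => c j * Real.exp (∑ k, W k j * x k), fun j => mul_pos (hc j) (Real.exp_pos _), ?_⟩
      funext i
      rw [hMapp]
      exact Finset.sum_congr rfl fun j _ => rfl
    · intro y hy
      obtain ⟨ε, hε, hball⟩ := Metric.isOpen_iff.mp isOpen_interior y hy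
      set s : Fin d → ℝ := fun i => ∑ j, W i j with hs
      set δ : ℝ := ε / (2 * (‖s‖ + 1)) with hδdef
      have hnorms : 0 ≤ ‖s‖ := norm_nonneg s
      have hδ : 0 < δ := by
        rw [hδdef]; positivity
      have hmem : y - δ • s ∈ Metric.ball y ε := by
        rw [Metric.mem_ball, dist_eq_norm]
        have : y - δ • s - y = -(δ • s) := by ring_nf
        rw [this, norm_neg, norm_smul, Real.norm_eq_abs, abs_of_pos hδ]
        rw [hδdef]
        rw [div_mul_eq_mul_div, div_lt_iff₀ (by positivity)]
        nlinarith
      have h7 : y - δ • s ∈ coneOf W := interior_subset (hball hmem)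
      obtain ⟨v, hv, hrep⟩ := h7
      obtain ⟨x, hx⟩ := Stmt0Aux.exists_preimage hd hdn W hW c hc (fun j => v j + δ)
        (fun j => add_pos_of_nonneg_of_pos (hv j) hδ)
      refine ⟨x, ?_⟩
      rw [hx]
      funext i
      have h8 := congrFun hrep i
      simp only [Pi.sub_apply, Pi.smul_apply, smul_eq_mul] at h8
      have h9 : ∑ j, (v j + δ) * W i j = (∑ j, v j * W i j) + δ * ∑ j, W i j := by
        rw [Finset.mul_sum, ← Finset.sum_add_distrib]
        exact Finset.sum_congr rfl fun j _ => by ring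
      rw [h9, ← h8]
      have : s i = ∑ j, W i j := rfl
      rw [← this]
      ring
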